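/- There exists a constant c > 0 such that for every d ≥ 2, for the power-set hypothesis class H_d consisting of all 2^d functions from a d-element instance set X_d to Bool, every collusion-free preference function σ and every initial hypothesis h0 ∈ H_d satisfy TD_{X_d,H_d,h0}(σ) ≥ c · d / log d; consequently Σ_lvs-TD for the power-set class of size d is Ω(d / log d). -/

import Mathlib

open scoped Classical

/-- A preference function `σ(h'; H', h)`: `h'` is a candidate hypothesis, `H'` the current
version space, `h` the learner's current hypothesis. -/
abbrev Pref (X : Type) : Type := (X → Bool) → Finset (X → Bool) → (X → Bool) → ℝ

variable {X : Type}

/-- `h` is consistent with the labeled examples in `S`. -/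
def ConsistentWith (h : X → Bool) (S : Finset (X × Bool)) : Prop := ∀ z ∈ S, h z.1 = z.2

/-- Version space of `H'` induced by the labeled examples `S`. -/
noncomputable def verSpace (H' : Finset (X → Bool)) (S : Finset (X × Bool)) :
    Finset (X → Bool) :=
  H'.filter fun h => ∀ z ∈ S, h z.1 = z.2

/-- The set of hypotheses in `H'` most preferred by `σ` given current hypothesis `h`. -/
noncomputable def argminSet (σ : Pref X) (H' : Finset (X → Bool)) (h : X → Bool) :
    Finset (X → Bool) :=
  H'.filter fun h' => ∀ h'' ∈ H', σ h' H' h ≤ σ h'' H' h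

/-- `C_σ(H', h, z)`: the candidate hypotheses most preferred by the learner after
receiving the labeled example `z`. -/
noncomputable def Cand (σ : Pref X) (H' : Finset (X → Bool)) (h : X → Bool) (z : X × Bool) :
    Finset (X → Bool) :=
  argminSet σ (verSpace H' {z}) h

/-- `Dle σ n H' h h*` means the worst-case teaching cost `D_σ(H', h, h*) ≤ n`. -/
def Dle (σ : Pref X) : ℕ → Finset (X → Bool) → (X → Bool) → (X → Bool) → Prop
  | 0, _, _, _ => False
  | n + 1, H', h, hstar =>
      (∃ z : X × Bool, hstar z.1 = z.2 ∧ Cand σ H' h z = {hstar}) ∨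
      (∃ z : X × Bool, hstar z.1 = z.2 ∧
        ∀ h'' ∈ Cand σ H' h z, Dle σ n (verSpace H' {z}) h'' hstar)

/-- The worst-case teaching cost `D_σ(H', h, h*)` (∞ when teaching is impossible). -/
noncomputable def Dval (σ : Pref X) (H' : Finset (X → Bool)) (h hstar : X → Bool) : ℕ∞ :=
  sInf {n : ℕ∞ | ∃ m : ℕ, n = (m : ℕ∞) ∧ Dle σ m H' h hstar}

/-- Teaching dimension `TD_{X,H,h0}(σ) = max_{h* ∈ H} D_σ(H, h0, h*)`. -/
noncomputable def TDpref (Hc : Finset (X → Bool)) (h0 : X → Bool) (σ : Pref X) : ℕ∞ :=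
  ⨆ hstar ∈ Hc, Dval σ Hc h0 hstar

/-- Teaching dimension of a family of preference functions: `Σ-TD = min_{σ ∈ Σ} TD(σ)`. -/
noncomputable def famTD (Hc : Finset (X → Bool)) (h0 : X → Bool) (F : Set (Pref X)) : ℕ∞ :=
  ⨅ σ ∈ F, TDpref Hc h0 σ

/-- A preference function is collusion-free. -/
def CollusionFree (Hc : Finset (X → Bool)) (σ : Pref X) : Prop :=
  ∀ h ∈ Hc, ∀ H' ⊆ Hc, ∀ hhat : X → Bool,
    argminSet σ H' h = {hhat} →
    ∀ S : Finset (X × Bool), ConsistentWith hhat S →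
      argminSet σ (verSpace H' S) hhat = {hhat}

/-- `Σ_const`: collusion-free constant preference functions. -/
def SigmaConst (Hc : Finset (X → Bool)) : Set (Pref X) :=
  {σ | CollusionFree Hc σ ∧ ∃ c : ℝ, ∀ h' H' h, σ h' H' h = c}

/-- `Σ_global`: collusion-free preference functions of the form `g(h')`. -/
def SigmaGlobal (Hc : Finset (X → Bool)) : Set (Pref X) :=
  {σ | CollusionFree Hc σ ∧ ∃ g : (X → Bool) → ℝ, ∀ h' H' h, σ h' H' h = g h'}

/-- `Σ_gvs`: collusion-free preference functions of the form `g(h', H')`. -/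
def SigmaGVS (Hc : Finset (X → Bool)) : Set (Pref X) :=
  {σ | CollusionFree Hc σ ∧
    ∃ g : (X → Bool) → Finset (X → Bool) → ℝ, ∀ h' H' h, σ h' H' h = g h' H'}

/-- `Σ_local`: collusion-free preference functions of the form `g(h', h)`. -/
def SigmaLocal (Hc : Finset (X → Bool)) : Set (Pref X) :=
  {σ | CollusionFree Hc σ ∧ ∃ g : (X → Bool) → (X → Bool) → ℝ, ∀ h' H' h, σ h' H' h = g h' h}

/-- `Σ_lvs`: all collusion-free preference functions. -/
def SigmaLVS (Hc : Finset (X → Bool)) : Set (Pref X) := {σ | CollusionFree Hc σ}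

/-- `T` is a teaching set for `h` w.r.t. the subclass `Hc`. -/
def IsTeachingSet (Hc : Finset (X → Bool)) (h : X → Bool) (T : Finset X) : Prop :=
  ∀ h' ∈ Hc, (∀ x ∈ T, h' x = h x) → h' = h

/-- Size of the minimum teaching set of `h` w.r.t. `Hc`. -/
noncomputable def minTSsize (Hc : Finset (X → Bool)) (h : X → Bool) : ℕ :=
  sInf {k | ∃ T : Finset X, T.card = k ∧ IsTeachingSet Hc h T}

/-- The classical (worst-case) teaching dimension `TD(H)`. -/
noncomputable def TDclassic (Hc : Finset (X → Bool)) : ℕ :=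
  Hc.sup (minTSsize Hc)

/-- Witness for `RTD(H) ≤ k`: an ordering of `H` where each hypothesis has a teaching
set of size at most `k` w.r.t. the remaining hypotheses. -/
def RTDwitness (Hc : Finset (X → Bool)) (k : ℕ) : Prop :=
  ∃ L : List (X → Bool), L.Nodup ∧ L.toFinset = Hc ∧
    ∀ (i : ℕ) (hi : i < L.length), ∃ T : Finset X, T.card ≤ k ∧
      IsTeachingSet (L.drop i).toFinset (L.get ⟨i, hi⟩) T

/-- The recursive teaching dimension `RTD(H)`. -/
noncomputable def RTD (Hc : Finset (X → Bool)) : ℕ := sInf {k | RTDwitness Hc k}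

/-- A teacher mapping is non-clashing on `Hc`. -/
def NonClashing (Hc : Finset (X → Bool)) (T : (X → Bool) → Finset X) : Prop :=
  ∀ h ∈ Hc, ∀ h' ∈ Hc, h ≠ h' →
    ¬ ((∀ x ∈ T h, h' x = h x) ∧ (∀ x ∈ T h', h x = h' x))

/-- The non-clashing teaching dimension `NCTD(H)`. -/
noncomputable def NCTD (Hc : Finset (X → Bool)) : ℕ :=
  sInf {k | ∃ T : (X → Bool) → Finset X, NonClashing Hc T ∧ ∀ h ∈ Hc, (T h).card ≤ k}

/-- `Hc` shatters the set of instances `X'`. -/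
def Shatters (Hc : Finset (X → Bool)) (X' : Finset X) : Prop :=
  ∀ b : X → Bool, ∃ h ∈ Hc, ∀ x ∈ X', h x = b x

/-- The VC dimension `VCD(H, X)`. -/
noncomputable def VCD (Hc : Finset (X → Bool)) : ℕ :=
  sSup {k | ∃ X' : Finset X, X'.card = k ∧ Shatters Hc X'}
noncomputable def pick (s : Finset (X → Bool)) : X → Bool :=
  if h : s.Nonempty then h.choose else fun _ => false

lemma pick_mem {s : Finset (X → Bool)} (h : s.Nonempty) : pick s ∈ s := by
  rw [pick, dif_pos h]; exact h.choose_spec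

lemma argminSet_nonempty (σ : Pref X) {s : Finset (X → Bool)} (hs : s.Nonempty)
    (h : X → Bool) : (argminSet σ s h).Nonempty := by
  obtain ⟨a, ha, hmin⟩ := Finset.exists_min_image s (fun h' => σ h' s h) hs
  exact ⟨a, Finset.mem_filter.2 ⟨ha, hmin⟩⟩

noncomputable def decode (σ : Pref X) :
    List (X × Bool) → Finset (X → Bool) → (X → Bool) → Option (X → Bool)
  | [], _, _ => none
  | [z], H', h => if hc : ∃ g, Cand σ H' h z = {g} then some hc.choose else none
  | z :: z' :: L, H', h => decode σ (z' :: L) (verSpace H' {z}) (pick (Cand σ H' h z))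

lemma mem_verSpace_singleton {H' : Finset (X → Bool)} {z : X × Bool} {g : X → Bool} :
    g ∈ verSpace H' {z} ↔ g ∈ H' ∧ g z.1 = z.2 := by
  simp [verSpace]

lemma decode_spec (σ : Pref X) : ∀ n (H' : Finset (X → Bool)) (h hstar : X → Bool),
    hstar ∈ H' → Dle σ n H' h hstar →
    ∃ L : List (X × Bool), L.length ≤ n ∧ decode σ L H' h = some hstar := by
  intro n
  induction n with
  | zero => intro _ _ _ _ hD; exact hD.elim
  | succ n ih =>
    intro H' h hstar hmem hD
    rcases hD with ⟨z, _, hC⟩ | ⟨z, hz, hall⟩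
    · refine ⟨[z], by simp, ?_⟩
      have hex : ∃ g, Cand σ H' h z = {g} := ⟨hstar, hC⟩
      have hch : hex.choose = hstar :=
        (Finset.singleton_injective (hC.symm.trans hex.choose_spec)).symm
      rw [decode, dif_pos hex, hch]
    · have hmem' : hstar ∈ verSpace H' {z} := mem_verSpace_singleton.2 ⟨hmem, hz⟩
      have hCne : (Cand σ H' h z).Nonempty := argminSet_nonempty σ ⟨hstar, hmem'⟩ h
      obtain ⟨L, hL, hdec⟩ := ih (verSpace H' {z}) (pick (Cand σ H' h z)) hstar hmem'
        (hall _ (pick_mem hCne))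
      cases L with
      | nil => simp [decode] at hdec
      | cons z' L' =>
        exact ⟨z :: z' :: L', by simpa using hL, by rw [decode]; exact hdec⟩

lemma card_bound {d t : ℕ} (σ : Pref (Fin d)) (h0 : Fin d → Bool)
    (H : ∀ hstar : Fin d → Bool, ∃ L : List (Fin d × Bool),
      L.length ≤ t ∧ decode σ L Finset.univ h0 = some hstar) :
    2 ^ d ≤ (2 * d + 1) ^ t := by
  choose L hlen hdec using H
  have hinj : Function.Injective
      (fun hstar : Fin d → Bool => fun i : Fin t => (L hstar)[(i : ℕ)]?) := by
    intro h1 h2 heq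
    have hLL : L h1 = L h2 := by
      apply List.ext_getElem?
      intro n
      by_cases hn : n < t
      · exact congrFun heq ⟨n, hn⟩
      · rw [List.getElem?_eq_none (le_trans (hlen h1) (not_lt.1 hn)),
          List.getElem?_eq_none (le_trans (hlen h2) (not_lt.1 hn))]
    have : some h1 = some h2 := (hdec h1).symm.trans (by rw [hLL]; exact hdec h2)
    exact Option.some.inj this
  calc 2 ^ d = Fintype.card (Fin d → Bool) := by simp
    _ ≤ Fintype.card (Fin t → Option (Fin d × Bool)) :=
        Fintype.card_le_of_injective _ hinj
    _ = (2 * d + 1) ^ t := by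
        simp [Fintype.card_fun]
        ring_nf

lemma numeric {d t : ℕ} (hd : 2 ≤ d) (h : 2 ^ d ≤ (2 * d + 1) ^ t) :
    Real.log 2 / 3 * d / Real.log d ≤ t := by
  have hd2 : (2 : ℝ) ≤ d := by exact_mod_cast hd
  have hlogd : 0 < Real.log d := Real.log_pos (by linarith)
  have h1 : (2 : ℝ) ^ d ≤ (2 * (d : ℝ) + 1) ^ t := by exact_mod_cast h
  have h2 : (d : ℝ) * Real.log 2 ≤ t * Real.log (2 * d + 1) := by
    have := Real.log_le_log (by positivity) h1
    rwa [Real.log_pow, Real.log_pow] at this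
  have h3 : Real.log (2 * (d : ℝ) + 1) ≤ 3 * Real.log d := by
    have hle : (2 * (d : ℝ) + 1) ≤ (d : ℝ) ^ 3 := by nlinarith [hd2, sq_nonneg ((d:ℝ) - 1), sq_nonneg ((d:ℝ) - 2)]
    calc Real.log (2 * (d : ℝ) + 1) ≤ Real.log ((d : ℝ) ^ 3) :=
          Real.log_le_log (by positivity) hle
      _ = 3 * Real.log d := by rw [Real.log_pow]; push_cast; ring
  have ht : (0 : ℝ) ≤ t := Nat.cast_nonneg t
  rw [div_le_iff₀ hlogd]
  nlinarith [mul_le_mul_of_nonneg_left h3 ht]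

lemma TD_lower {d : ℕ} (hd : 2 ≤ d) (σ : Pref (Fin d)) (h0 : Fin d → Bool) :
    ENNReal.ofReal (Real.log 2 / 3 * d / Real.log d) ≤
      ((TDpref (Finset.univ : Finset (Fin d → Bool)) h0 σ : ℕ∞) : ENNReal) := by
  rcases eq_or_ne (TDpref (Finset.univ : Finset (Fin d → Bool)) h0 σ) ⊤ with hT | hT
  · rw [hT, ENat.toENNReal_top]; exact le_top
  · lift (TDpref (Finset.univ : Finset (Fin d → Bool)) h0 σ) to ℕ using hT with t ht
    have key : ∀ hstar : Fin d → Bool, ∃ L : List (Fin d × Bool),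
        L.length ≤ t ∧ decode σ L Finset.univ h0 = some hstar := by
      intro hstar
      have hDval : Dval σ Finset.univ h0 hstar ≤ (t : ℕ∞) := by
        rw [ht]
        exact le_iSup₂ (f := fun h' (_ : h' ∈ (Finset.univ : Finset (Fin d → Bool))) =>
          Dval σ Finset.univ h0 h') hstar (Finset.mem_univ _)
      set Tset : Set ℕ := {m | Dle σ m Finset.univ h0 hstar} with hTset
      have hne : Tset.Nonempty := by
        by_contra hempty
        rw [Set.not_nonempty_iff_eq_empty] at hempty
        have hS : {n : ℕ∞ | ∃ m : ℕ, n = (m : ℕ∞) ∧ Dle σ m Finset.univ h0 hstar} = ∅ := by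
          ext n
          simp only [Set.mem_setOf_eq, Set.mem_empty_iff_false, iff_false, not_exists]
          rintro m ⟨rfl, hm⟩
          exact absurd (Set.eq_empty_iff_forall_notMem.1 hempty m) (fun h => h hm)
        rw [Dval, hS, sInf_empty] at hDval
        exact absurd hDval (by simp)
      have hm0 : sInf Tset ∈ Tset := Nat.sInf_mem hne
      have hle : ((sInf Tset : ℕ) : ℕ∞) ≤ (t : ℕ∞) := by
        refine le_trans ?_ hDval
        rw [Dval]
        apply le_sInf
        rintro n ⟨m, rfl, hm⟩
        exact_mod_cast Nat.sInf_le (show m ∈ Tset from hm)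
      have hlt : sInf Tset ≤ t := by exact_mod_cast hle
      obtain ⟨L, hL, hdec⟩ := decode_spec σ (sInf Tset) Finset.univ h0 hstar
        (Finset.mem_univ _) hm0
      exact ⟨L, le_trans hL hlt, hdec⟩
    have hnum := numeric hd (card_bound σ h0 key)
    rw [ENat.toENNReal_coe]
    calc ENNReal.ofReal (Real.log 2 / 3 * d / Real.log d)
        ≤ ENNReal.ofReal t := ENNReal.ofReal_le_ofReal hnum
      _ = (t : ENNReal) := ENNReal.ofReal_natCast t

lemma const_collusionFree (Hc : Finset (X → Bool)) :
    CollusionFree Hc (fun _ _ _ => (0 : ℝ)) := by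
  intro h _ H' _ hhat harg S hcons
  have hH' : argminSet (fun _ _ _ => (0 : ℝ)) H' h = H' :=
    Finset.filter_true_of_mem (fun a _ => fun b _ => le_refl _)
  rw [hH'] at harg
  have hvs : verSpace {hhat} S = {hhat} := by
    refine Finset.Subset.antisymm (Finset.filter_subset _ _) ?_
    intro a ha
    rw [Finset.mem_singleton] at ha
    subst ha
    exact Finset.mem_filter.2 ⟨Finset.mem_singleton_self _, hcons⟩
  rw [harg, hvs]
  exact Finset.filter_true_of_mem (fun a _ => fun b _ => le_refl _)


/-- for the power-set class of size `d`, every collusion-free preference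
function has teaching dimension `Ω(d / log d)`; consequently so does `Σ_lvs-TD`. -/
theorem powerset_lower_bound :
    ∃ c : ℝ, 0 < c ∧ ∀ d : ℕ, 2 ≤ d →
      (∀ σ : Pref (Fin d), CollusionFree (Finset.univ : Finset (Fin d → Bool)) σ →
        ∀ h0 ∈ (Finset.univ : Finset (Fin d → Bool)),
          ENNReal.ofReal (c * d / Real.log d) ≤
            (TDpref (Finset.univ : Finset (Fin d → Bool)) h0 σ : ENNReal)) ∧
      (∀ h0 ∈ (Finset.univ : Finset (Fin d → Bool)),
        ENNReal.ofReal (c * d / Real.log d) ≤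
          (famTD (Finset.univ : Finset (Fin d → Bool)) h0
            (SigmaLVS (Finset.univ : Finset (Fin d → Bool))) : ENNReal)) := by

  refine ⟨Real.log 2 / 3, div_pos (Real.log_pos one_lt_two) (by norm_num), ?_⟩
  intro d hd
  constructor
  · intro σ _ h0 _
    exact TD_lower hd σ h0
  · intro h0 _
    have hF : (SigmaLVS (Finset.univ : Finset (Fin d → Bool))).Nonempty :=
      ⟨fun _ _ _ => (0 : ℝ), const_collusionFree _⟩
    have himg : ((fun σ => TDpref (Finset.univ : Finset (Fin d → Bool)) h0 σ) ''
        SigmaLVS (Finset.univ : Finset (Fin d → Bool))).Nonempty := hF.image _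
    obtain ⟨σ0, hσ0, heq⟩ := csInf_mem himg
    have hfam : famTD (Finset.univ : Finset (Fin d → Bool)) h0
        (SigmaLVS (Finset.univ : Finset (Fin d → Bool))) =
        TDpref (Finset.univ : Finset (Fin d → Bool)) h0 σ0 := by
      rw [famTD, ← sInf_image]
      exact heq.symm
    rw [hfam]
    exact TD_lower hd σ0 h0
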